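/- Let u₀ with D^m u₀ ∈ H¹_α(ℝ³) for some m ∈ ℕ ∪ {0}, div u₀ = 0, and decay character r*(u₀) = r* ∈ (−3/2, ∞). Let ū solve ∂_t(ū − αΔū) − μΔū = 0 with ū(0) = u₀. Then there exist constants C̃₂, C̃₃ > 0 such that ‖D^m ū(t)‖²_{H¹_α(ℝ³)} ≤ C̃₂(t + C̃₃)^{−(3/2 + r* + m)} for all t ≥ 0. -/

import Mathlib

/- STATEMENT 19: Decay of derivatives of the linear solution. If D^m u₀ ∈ H¹_α(ℝ³),
   div u₀ = 0, and the decay character r*(u₀) = r ∈ (−3/2,∞) exists (indicator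
   limit P with 0 < P < ∞), then there are C̃₂, C̃₃ > 0 with
   ‖D^m ū(t)‖²_{H¹_α} ≤ C̃₂(t + C̃₃)^{−(3/2 + r + m)} for all t ≥ 0. On the Fourier
   side (Plancherel, constants absorbed)
   ‖D^m ū(t)‖²_{H¹_α} = ∫ |ξ|^{2m}(1+α|ξ|²)|e^{-μ|ξ|²t/(1+α|ξ|²)} û₀(ξ)|² dξ. -/

noncomputable section
open MeasureTheory Filter

abbrev E3 := EuclideanSpace ℝ (Fin 3)
abbrev F3 := EuclideanSpace ℂ (Fin 3)

lemma aux_exp_rpow {b K : ℝ} (hb : 0 < b) (hK : 0 < K) :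
    ∃ C : ℝ, 0 < C ∧ ∀ t : ℝ, 0 ≤ t → Real.exp (-(b * t)) ≤ C * (t + 1) ^ (-K) := by
  set ε : ℝ := min 1 (b / K) with hε
  have hε0 : 0 < ε := lt_min one_pos (by positivity)
  have hε1 : ε ≤ 1 := min_le_left _ _
  have hεK : ε * K ≤ b := by
    have : ε ≤ b / K := min_le_right _ _
    calc ε * K ≤ (b / K) * K := by nlinarith
    _ = b := by field_simp
  refine ⟨(ε⁻¹) ^ K, by positivity, fun t ht => ?_⟩
  have ht1 : (0:ℝ) < t + 1 := by linarith
  have h1 : t + 1 ≤ ε⁻¹ * Real.exp (ε * t) := by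
    have h2 := Real.add_one_le_exp (ε * t)
    have h4 : ε * (t + 1) ≤ Real.exp (ε * t) := by nlinarith
    calc t + 1 = ε⁻¹ * (ε * (t + 1)) := by field_simp
    _ ≤ ε⁻¹ * Real.exp (ε * t) := by
        apply mul_le_mul_of_nonneg_left h4 (by positivity)
  have h3 : (t + 1) ^ K ≤ (ε⁻¹) ^ K * Real.exp (b * t) := by
    calc (t + 1) ^ K ≤ (ε⁻¹ * Real.exp (ε * t)) ^ K :=
          Real.rpow_le_rpow (le_of_lt ht1) h1 hK.le
    _ = (ε⁻¹) ^ K * (Real.exp (ε * t)) ^ K := Real.mul_rpow (by positivity) (by positivity)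
    _ = (ε⁻¹) ^ K * Real.exp (ε * t * K) := by rw [← Real.exp_mul]
    _ ≤ (ε⁻¹) ^ K * Real.exp (b * t) := by
        apply mul_le_mul_of_nonneg_left (Real.exp_le_exp.mpr (by nlinarith)) (by positivity)
  rw [Real.rpow_neg ht1.le, mul_comm ((ε⁻¹) ^ K) _, ← div_eq_inv_mul,
    le_div_iff₀ (by positivity)]
  calc Real.exp (-(b * t)) * (t + 1) ^ K
      ≤ Real.exp (-(b * t)) * ((ε⁻¹) ^ K * Real.exp (b * t)) := by
        apply mul_le_mul_of_nonneg_left h3 (Real.exp_pos _).le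
    _ = (ε⁻¹) ^ K * (Real.exp (-(b * t)) * Real.exp (b * t)) := by ring
    _ = (ε⁻¹) ^ K := by rw [← Real.exp_add]; simp

lemma aux_ftc {b : ℝ} (hb : 0 < b) (n : ℕ) {x : ℝ} (hx : 0 ≤ x) (hx1 : x ≤ 1) :
    x ^ n * Real.exp (-b * x ^ 2) ≤
      Real.exp (-b) + ∫ s in x..(1:ℝ), 2 * b * s ^ (n + 1) * Real.exp (-b * s ^ 2) := by
  set h' : ℝ → ℝ := fun s => (n : ℝ) * s ^ (n - 1) * Real.exp (-b * s ^ 2)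
    + s ^ n * (Real.exp (-b * s ^ 2) * (-b * (2 * s))) with hh'
  have hder : ∀ s : ℝ, HasDerivAt (fun s : ℝ => s ^ n * Real.exp (-b * s ^ 2)) (h' s) s := by
    intro s
    have h1 : HasDerivAt (fun s : ℝ => s ^ n) ((n : ℝ) * s ^ (n - 1)) s := hasDerivAt_pow n s
    have h2 : HasDerivAt (fun s : ℝ => -b * s ^ 2) (-b * (2 * s)) s := by
      have := (hasDerivAt_pow 2 s).const_mul (-b)
      simpa using this
    exact h1.mul h2.exp
  have hcont : Continuous h' := by fun_prop
  have hint : IntervalIntegrable h' volume x 1 := hcont.intervalIntegrable _ _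
  have heq : ∫ s in x..(1:ℝ), h' s
      = 1 ^ n * Real.exp (-b * 1 ^ 2) - x ^ n * Real.exp (-b * x ^ 2) :=
    intervalIntegral.integral_eq_sub_of_hasDerivAt (fun s _ => hder s) hint
  have hmono : ∫ s in x..(1:ℝ), (- h' s) ≤
      ∫ s in x..(1:ℝ), 2 * b * s ^ (n + 1) * Real.exp (-b * s ^ 2) := by
    apply intervalIntegral.integral_mono_on hx1 (hcont.neg.intervalIntegrable _ _)
      ((by fun_prop : Continuous fun s : ℝ => 2 * b * s ^ (n + 1) * Real.exp (-b * s ^ 2)).intervalIntegrable _ _)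
    intro s hs
    have hs0 : 0 ≤ s := le_trans hx hs.1
    have e1 : 0 ≤ (n : ℝ) * s ^ (n - 1) * Real.exp (-b * s ^ 2) := by positivity
    have e2 : s ^ n * (Real.exp (-b * s ^ 2) * (-b * (2 * s)))
        = -(2 * b * s ^ (n + 1) * Real.exp (-b * s ^ 2)) := by
      rw [pow_succ]; ring
    simp only [hh', Pi.neg_apply, neg_add, e2]
    nlinarith [Real.exp_pos (-b * s ^ 2), pow_nonneg hs0 (n+1)]
  rw [intervalIntegral.integral_neg, heq] at hmono
  norm_num at hmono
  simp only [neg_mul] at hmono ⊢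
  linarith

lemma aux_low {b A lam : ℝ} (hb : 0 < b) (hA : 0 < A) (hlam : 0 < lam) (n : ℕ)
    (q : E3 → ℝ) (hq0 : ∀ ξ, 0 ≤ q ξ) (hqm : AEStronglyMeasurable q volume)
    (hqi : IntegrableOn q (Metric.closedBall (0:E3) 1))
    (hF : ∀ s ∈ Set.Ioc (0:ℝ) 1, (∫ ξ in Metric.closedBall (0:E3) s, q ξ) ≤ A * s ^ lam) :
    ∫ ξ in Metric.closedBall (0:E3) 1, ‖ξ‖ ^ n * Real.exp (-b * ‖ξ‖ ^ 2) * q ξ ≤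
      Real.exp (-b) * A
        + A * Real.Gamma (((n:ℝ) + 1 + lam + 1) / 2) * b ^ (-(((n:ℝ) + lam) / 2)) := by
  set B := Metric.closedBall (0:E3) 1 with hB
  have hBmeas : MeasurableSet B := Metric.isClosed_closedBall.measurableSet
  set φ : ℝ → ℝ := fun s => 2 * b * s ^ (n + 1) * Real.exp (-b * s ^ 2) with hφ
  have hφc : Continuous φ := by fun_prop
  have hφ0 : ∀ s : ℝ, 0 ≤ s → 0 ≤ φ s := fun s hs => by positivity
  set Ψ : E3 → ℝ := fun ξ => ∫ s in Set.Ioc ‖ξ‖ 1, φ s with hΨdef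
  have hmemB : ∀ ξ : E3, ξ ∈ B → ‖ξ‖ ≤ 1 := by
    intro ξ hξ; simpa [hB, mem_closedBall_zero_iff] using hξ
  have hprim : Continuous fun x : ℝ => ∫ s in x..(1:ℝ), φ s := by
    have h1 : Continuous fun x : ℝ => ∫ s in (1:ℝ)..x, φ s :=
      intervalIntegral.continuous_primitive (fun a b => hφc.intervalIntegrable a b) 1
    have h2 : (fun x : ℝ => ∫ s in x..(1:ℝ), φ s) = fun x => -∫ s in (1:ℝ)..x, φ s := by
      funext x; rw [intervalIntegral.integral_symm]
    rw [h2]; exact h1.neg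
  have hΨeq : ∀ ξ : E3, ξ ∈ B → Ψ ξ = ∫ s in ‖ξ‖..(1:ℝ), φ s := by
    intro ξ hξ
    rw [intervalIntegral.integral_of_le (hmemB ξ hξ)]
  have hΨc : Continuous (fun ξ : E3 => ∫ s in ‖ξ‖..(1:ℝ), φ s) := hprim.comp continuous_norm
  set D : ℝ := ∫ s in Set.Ioc (0:ℝ) 1, φ s with hD
  have hφint : IntegrableOn φ (Set.Ioc (0:ℝ) 1) := hφc.integrableOn_Ioc
  have hΨ0 : ∀ ξ : E3, 0 ≤ Ψ ξ := by
    intro ξ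
    apply setIntegral_nonneg measurableSet_Ioc
    intro s hs; exact hφ0 s (le_trans (norm_nonneg ξ) hs.1.le)
  have hΨD : ∀ ξ : E3, Ψ ξ ≤ D := by
    intro ξ
    apply setIntegral_mono_set hφint
    · filter_upwards [ae_restrict_mem measurableSet_Ioc] with s hs
      exact hφ0 s hs.1.le
    · exact HasSubset.Subset.eventuallyLE (Set.Ioc_subset_Ioc_left (norm_nonneg ξ))
  -- integrability facts
  have hlhs_int : IntegrableOn (fun ξ : E3 => ‖ξ‖ ^ n * Real.exp (-b * ‖ξ‖ ^ 2) * q ξ) B := by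
    apply Integrable.mono' hqi
    · exact ((by fun_prop : Continuous fun ξ : E3 => ‖ξ‖ ^ n * Real.exp (-b * ‖ξ‖ ^ 2)).aestronglyMeasurable).mul
        hqm.restrict
    · filter_upwards [ae_restrict_mem hBmeas] with ξ hξ
      have h1 : ‖ξ‖ ≤ 1 := hmemB ξ hξ
      have e1 : ‖ξ‖ ^ n ≤ 1 := pow_le_one₀ (norm_nonneg _) h1
      have e2 : Real.exp (-b * ‖ξ‖ ^ 2) ≤ 1 :=
        Real.exp_le_one_iff.mpr (by nlinarith [sq_nonneg ‖ξ‖])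
      rw [Real.norm_eq_abs, abs_of_nonneg (mul_nonneg (by positivity) (hq0 ξ))]
      have e3 : ‖ξ‖ ^ n * Real.exp (-b * ‖ξ‖ ^ 2) ≤ 1 :=
        mul_le_one₀ e1 (Real.exp_pos _).le e2
      exact mul_le_of_le_one_left (hq0 ξ) e3
  have hΨqm : AEStronglyMeasurable (fun ξ : E3 => Ψ ξ * q ξ) (volume.restrict B) := by
    apply AEStronglyMeasurable.mul _ hqm.restrict
    apply (hΨc.aestronglyMeasurable.restrict (s := B)).congr
    filter_upwards [ae_restrict_mem hBmeas] with ξ hξ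
    exact (hΨeq ξ hξ).symm
  have hΨq_int : IntegrableOn (fun ξ : E3 => Ψ ξ * q ξ) B := by
    apply Integrable.mono' (hqi.const_mul D) hΨqm
    apply Filter.Eventually.of_forall
    intro ξ
    rw [Real.norm_eq_abs, abs_of_nonneg (mul_nonneg (hΨ0 ξ) (hq0 ξ))]
    exact mul_le_mul_of_nonneg_right (hΨD ξ) (hq0 ξ)
  -- step 1 : pointwise FTC bound
  have step1 : ∫ ξ in B, ‖ξ‖ ^ n * Real.exp (-b * ‖ξ‖ ^ 2) * q ξ ≤
      ∫ ξ in B, (Real.exp (-b) * q ξ + Ψ ξ * q ξ) := by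
    apply setIntegral_mono_on hlhs_int (((hqi.const_mul _)).add hΨq_int) hBmeas
    intro ξ hξ
    have h1 : ‖ξ‖ ≤ 1 := hmemB ξ hξ
    have h2 := aux_ftc hb n (norm_nonneg ξ) h1
    calc ‖ξ‖ ^ n * Real.exp (-b * ‖ξ‖ ^ 2) * q ξ
        ≤ (Real.exp (-b) + ∫ s in ‖ξ‖..(1:ℝ), φ s) * q ξ :=
          mul_le_mul_of_nonneg_right h2 (hq0 ξ)
      _ = Real.exp (-b) * q ξ + Ψ ξ * q ξ := by rw [hΨeq ξ hξ]; ring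
  have step2 : ∫ ξ in B, (Real.exp (-b) * q ξ + Ψ ξ * q ξ)
      = Real.exp (-b) * (∫ ξ in B, q ξ) + ∫ ξ in B, Ψ ξ * q ξ := by
    rw [integral_add (hqi.const_mul _) hΨq_int, integral_const_mul]
  have hFB : ∫ ξ in B, q ξ ≤ A := by
    have := hF 1 ⟨one_pos, le_refl 1⟩
    simpa [Real.one_rpow] using this
  -- Fubini
  set ν := volume.restrict (Set.Ioc (0:ℝ) 1) with hν
  set μB := volume.restrict B with hμB
  set T : Set (E3 × ℝ) := {p | ‖p.1‖ < p.2} with hT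
  have hTmeas : MeasurableSet T := measurableSet_lt measurable_fst.norm measurable_snd
  set F2 : E3 × ℝ → ℝ := T.indicator (fun p => φ p.2 * q p.1) with hF2
  have hF2meas : AEStronglyMeasurable F2 (μB.prod ν) := by
    apply AEStronglyMeasurable.indicator _ hTmeas
    exact ((hφc.comp continuous_snd).aestronglyMeasurable).mul
      (AEStronglyMeasurable.comp_fst hqm.restrict)
  have habs : Integrable (fun z : E3 × ℝ => q z.1 * |φ z.2|) (μB.prod ν) :=
    Integrable.mul_prod hqi hφint.abs
  have hF2int : Integrable F2 (μB.prod ν) := by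
    apply habs.mono' hF2meas
    apply Filter.Eventually.of_forall
    intro p
    rw [Real.norm_eq_abs]
    by_cases hp : p ∈ T
    · rw [hF2, Set.indicator_of_mem hp, abs_mul, abs_of_nonneg (hq0 p.1)]
      exact le_of_eq (mul_comm _ _)
    · rw [hF2, Set.indicator_of_notMem hp, abs_zero]
      exact mul_nonneg (hq0 _) (abs_nonneg _)
  have hswap : ∫ ξ, (∫ s, F2 (ξ, s) ∂ν) ∂μB = ∫ s, (∫ ξ, F2 (ξ, s) ∂μB) ∂ν :=
    integral_integral_swap hF2int
  have hleft : ∫ ξ, (∫ s, F2 (ξ, s) ∂ν) ∂μB = ∫ ξ in B, Ψ ξ * q ξ := by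
    apply setIntegral_congr_fun hBmeas
    intro ξ hξ
    have e1 : ∀ s : ℝ, F2 (ξ, s) = Set.indicator (Set.Ioi ‖ξ‖) (fun s => φ s * q ξ) s := by
      intro s
      simp [hF2, hT, Set.indicator_apply, Set.mem_Ioi, Set.mem_setOf_eq]
    simp only [e1]
    rw [hν, setIntegral_indicator measurableSet_Ioi]
    have e2 : Set.Ioc (0:ℝ) 1 ∩ Set.Ioi ‖ξ‖ = Set.Ioc ‖ξ‖ 1 := by
      ext s
      simp only [Set.mem_inter_iff, Set.mem_Ioc, Set.mem_Ioi]
      constructor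
      · rintro ⟨⟨_, h2⟩, h3⟩; exact ⟨h3, h2⟩
      · rintro ⟨h3, h2⟩; exact ⟨⟨lt_of_le_of_lt (norm_nonneg ξ) h3, h2⟩, h3⟩
    rw [e2, integral_mul_const]
  have hright : ∀ s : ℝ, s ∈ Set.Ioc (0:ℝ) 1 →
      (∫ ξ, F2 (ξ, s) ∂μB) ≤ φ s * (A * s ^ lam) := by
    intro s hs
    have e1 : ∀ ξ : E3, F2 (ξ, s) = Set.indicator {ξ : E3 | ‖ξ‖ < s} (fun ξ => φ s * q ξ) ξ := by
      intro ξ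
      simp [hF2, hT, Set.indicator_apply, Set.mem_setOf_eq]
    simp only [e1]
    rw [hμB, setIntegral_indicator (measurableSet_lt measurable_norm measurable_const),
      integral_const_mul]
    have hsub : B ∩ {ξ : E3 | ‖ξ‖ < s} ⊆ Metric.closedBall (0:E3) s := by
      intro ξ hξ
      simp only [Set.mem_inter_iff, Set.mem_setOf_eq] at hξ
      simpa [mem_closedBall_zero_iff] using hξ.2.le
    have hmono : ∫ ξ in B ∩ {ξ : E3 | ‖ξ‖ < s}, q ξ ≤ ∫ ξ in Metric.closedBall (0:E3) s, q ξ := by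
      apply setIntegral_mono_set (hqi.mono_set (by
        intro ξ hξ
        simp only [hB, mem_closedBall_zero_iff] at hξ ⊢
        exact le_trans hξ hs.2))
      · filter_upwards [ae_restrict_mem Metric.isClosed_closedBall.measurableSet] with ξ _
        exact hq0 ξ
      · exact HasSubset.Subset.eventuallyLE hsub
    exact mul_le_mul_of_nonneg_left (le_trans hmono (hF s hs)) (hφ0 s hs.1.le)
  have hright_int : Integrable (fun s : ℝ => ∫ ξ, F2 (ξ, s) ∂μB) ν :=
    hF2int.integral_prod_right
  have hRHS_int : IntegrableOn (fun s : ℝ => φ s * (A * s ^ lam)) (Set.Ioc (0:ℝ) 1) := by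
    apply Integrable.mono' (g := fun _ : ℝ => 2 * b * A)
      (integrableOn_const measure_Ioc_lt_top.ne)
    · exact (hφc.aestronglyMeasurable.restrict).mul
        ((measurable_const.mul (measurable_id.pow_const lam : Measurable fun s : ℝ => s ^ lam)).aestronglyMeasurable : AEStronglyMeasurable (fun s : ℝ => A * s ^ lam) _).restrict
    · filter_upwards [ae_restrict_mem measurableSet_Ioc] with s hs
      have hs0 : (0:ℝ) < s := hs.1
      have e1 : φ s ≤ 2 * b := by
        have : s ^ (n+1) * Real.exp (-b * s ^ 2) ≤ 1 := by
          have e2 : s ^ (n+1) ≤ 1 := pow_le_one₀ hs0.le hs.2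
          have e3 : Real.exp (-b * s ^ 2) ≤ 1 := Real.exp_le_one_iff.mpr (by nlinarith)
          nlinarith [pow_nonneg hs0.le (n+1), Real.exp_pos (-b * s ^ 2)]
        calc φ s = 2 * b * (s ^ (n+1) * Real.exp (-b * s ^ 2)) := by rw [hφ]; ring
          _ ≤ 2 * b * 1 := by nlinarith
          _ = 2 * b := by ring
      have e4 : s ^ lam ≤ 1 := Real.rpow_le_one hs0.le hs.2 hlam.le
      rw [Real.norm_eq_abs, abs_of_nonneg (mul_nonneg (hφ0 s hs0.le) (by positivity))]
      calc φ s * (A * s ^ lam) ≤ (2*b) * (A * 1) := by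
            apply mul_le_mul e1 (by nlinarith [Real.rpow_nonneg hs0.le lam]) (by positivity) (by positivity)
        _ = 2 * b * A := by ring
  have step3 : ∫ s, (∫ ξ, F2 (ξ, s) ∂μB) ∂ν ≤ ∫ s in Set.Ioc (0:ℝ) 1, φ s * (A * s ^ lam) := by
    rw [hν]
    exact setIntegral_mono_on hright_int hRHS_int measurableSet_Ioc hright
  -- Gamma computation
  have hgamma : ∫ s in Set.Ioc (0:ℝ) 1, φ s * (A * s ^ lam)
      ≤ A * Real.Gamma (((n:ℝ) + 1 + lam + 1) / 2) * b ^ (-(((n:ℝ) + lam) / 2)) := by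
    set q' : ℝ := (n:ℝ) + 1 + lam with hq'def
    have hq'gt : (-1:ℝ) < q' := by
      have : (0:ℝ) ≤ (n:ℝ) := Nat.cast_nonneg n
      simp only [hq'def]; linarith
    have e5 : ∫ s in Set.Ioc (0:ℝ) 1, φ s * (A * s ^ lam)
        = ∫ s in Set.Ioc (0:ℝ) 1, (2 * b * A) * (s ^ q' * Real.exp (-b * s ^ 2)) := by
      apply setIntegral_congr_fun measurableSet_Ioc
      intro s hs
      have e6 : (s:ℝ) ^ (n+1) * s ^ lam = s ^ q' := by
        rw [← Real.rpow_natCast s (n+1), ← Real.rpow_add hs.1]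
        congr 1
        push_cast; ring
      calc φ s * (A * s ^ lam) = (2 * b * A) * (s ^ (n+1) * s ^ lam * Real.exp (-b * s ^ 2)) := by
            rw [hφ]; ring
        _ = (2 * b * A) * (s ^ q' * Real.exp (-b * s ^ 2)) := by rw [e6]
    have e7 : ∫ s in Set.Ioc (0:ℝ) 1, s ^ q' * Real.exp (-b * s ^ 2)
        ≤ ∫ s in Set.Ioi (0:ℝ), s ^ q' * Real.exp (-b * s ^ 2) := by
      apply setIntegral_mono_set (integrableOn_rpow_mul_exp_neg_mul_sq hb hq'gt)
      · filter_upwards [ae_restrict_mem measurableSet_Ioi] with s hs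
        have hs0 : (0:ℝ) < s := hs
        positivity
      · exact HasSubset.Subset.eventuallyLE Set.Ioc_subset_Ioi_self
    have e8 : ∫ s in Set.Ioi (0:ℝ), s ^ q' * Real.exp (-b * s ^ 2)
        = b ^ (-(q' + 1) / 2) * (1 / 2) * Real.Gamma ((q' + 1) / 2) := by
      rw [← integral_rpow_mul_exp_neg_mul_rpow (by norm_num : (0:ℝ) < 2) hq'gt hb]
      apply setIntegral_congr_fun measurableSet_Ioi
      intro s hs
      have h2 : s ^ (2:ℝ) = s ^ (2:ℕ) := by
        rw [show ((2:ℝ)) = ((2:ℕ):ℝ) by norm_num, Real.rpow_natCast]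
      simp only [h2]
    have e9 : (2 * b * A) * (b ^ (-(q' + 1) / 2) * (1 / 2) * Real.Gamma ((q' + 1) / 2))
        = A * Real.Gamma (((n:ℝ) + 1 + lam + 1) / 2) * b ^ (-(((n:ℝ) + lam) / 2)) := by
      have e10 : b * b ^ (-(q' + 1) / 2) = b ^ (-(((n:ℝ) + lam) / 2)) := by
        nth_rewrite 1 [← Real.rpow_one b]
        rw [← Real.rpow_add hb]
        congr 1
        simp only [hq'def]; ring
      calc (2 * b * A) * (b ^ (-(q' + 1) / 2) * (1 / 2) * Real.Gamma ((q' + 1) / 2))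
          = A * Real.Gamma ((q' + 1) / 2) * (b * b ^ (-(q' + 1) / 2)) := by ring
        _ = A * Real.Gamma (((n:ℝ) + 1 + lam + 1) / 2) * b ^ (-(((n:ℝ) + lam) / 2)) := by
            rw [e10, hq'def]
    calc ∫ s in Set.Ioc (0:ℝ) 1, φ s * (A * s ^ lam)
        = (2 * b * A) * ∫ s in Set.Ioc (0:ℝ) 1, s ^ q' * Real.exp (-b * s ^ 2) := by
          rw [e5, integral_const_mul]
      _ ≤ (2 * b * A) * ∫ s in Set.Ioi (0:ℝ), s ^ q' * Real.exp (-b * s ^ 2) := by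
          apply mul_le_mul_of_nonneg_left e7 (by positivity)
      _ = A * Real.Gamma (((n:ℝ) + 1 + lam + 1) / 2) * b ^ (-(((n:ℝ) + lam) / 2)) := by
          rw [e8, e9]
  -- combine
  calc ∫ ξ in B, ‖ξ‖ ^ n * Real.exp (-b * ‖ξ‖ ^ 2) * q ξ
      ≤ Real.exp (-b) * (∫ ξ in B, q ξ) + ∫ ξ in B, Ψ ξ * q ξ := by rw [← step2]; exact step1
    _ ≤ Real.exp (-b) * A + A * Real.Gamma (((n:ℝ) + 1 + lam + 1) / 2)
          * b ^ (-(((n:ℝ) + lam) / 2)) := by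
        apply add_le_add
        · exact mul_le_mul_of_nonneg_left hFB (Real.exp_pos _).le
        · rw [← hleft, hswap]
          exact le_trans step3 hgamma

set_option maxHeartbeats 1000000 in
theorem linear_derivative_decay (α μ : ℝ) (hα : 0 < α) (hμ : 0 < μ) (m : ℕ)
    (u0hat : E3 → F3)
    (hHm : MemLp (fun ξ : E3 => ‖ξ‖ ^ m * ‖u0hat ξ‖) 2 volume)
    (hHm1 : MemLp (fun ξ : E3 => ‖ξ‖ ^ (m + 1) * ‖u0hat ξ‖) 2 volume)
    (hdiv : ∀ ξ : E3, (∑ i : Fin 3, (ξ i : ℂ) * u0hat ξ i) = 0)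
    (r P : ℝ) (hr : -(3 / 2 : ℝ) < r) (hP : 0 < P)
    (hlim : Tendsto
      (fun ρ : ℝ => ρ ^ (-2 * r - 3) *
        ∫ ξ in Metric.closedBall (0 : E3) ρ, ‖u0hat ξ‖ ^ 2)
      (nhdsWithin 0 (Set.Ioi 0)) (nhds P)) :
    ∃ C₂ C₃ : ℝ, 0 < C₂ ∧ 0 < C₃ ∧ ∀ t : ℝ, 0 ≤ t →
      (∫ ξ : E3, ‖ξ‖ ^ (2 * m) * (1 + α * ‖ξ‖ ^ 2) *
          ‖Real.exp (-(μ * ‖ξ‖ ^ 2) * t / (1 + α * ‖ξ‖ ^ 2)) • u0hat ξ‖ ^ 2) ≤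
        C₂ * (t + C₃) ^ (-(3 / 2 + r + (m : ℝ))) := by
  set K : ℝ := 3 / 2 + r + (m : ℝ) with hKdef
  have hm0 : (0:ℝ) ≤ (m:ℝ) := Nat.cast_nonneg m
  have hK : 0 < K := by simp only [hKdef]; linarith
  set lam : ℝ := 2 * r + 3 with hlamdef
  have hlam : 0 < lam := by simp only [hlamdef]; linarith
  set q : E3 → ℝ := fun ξ => ‖u0hat ξ‖ ^ 2 with hqdef
  have hq0 : ∀ ξ, 0 ≤ q ξ := fun ξ => sq_nonneg _
  have h1α : (0:ℝ) < 1 + α := by linarith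
  set c : ℝ := 2 * μ / (1 + α) with hcdef
  have hc : 0 < c := div_pos (by linarith) h1α
  have hc' : c * (1 + α) = 2 * μ := by rw [hcdef, div_mul_cancel₀ _ h1α.ne']
  set B : Set E3 := Metric.closedBall (0:E3) 1 with hBset
  have hBmeas : MeasurableSet B := Metric.isClosed_closedBall.measurableSet
  -- measurability of q
  have hz : ∀ᵐ ξ : E3, ξ ≠ 0 := by
    rw [MeasureTheory.ae_iff]
    simp only [ne_eq, not_not, Set.setOf_eq_eq_singleton]
    exact measure_singleton 0
  have hnu : AEStronglyMeasurable (fun ξ : E3 => ‖u0hat ξ‖) volume := by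
    have h1 := hHm.aestronglyMeasurable
    have h2 : AEStronglyMeasurable (fun ξ : E3 => (‖ξ‖ ^ m * ‖u0hat ξ‖) * (‖ξ‖ ^ m)⁻¹) volume :=
      h1.mul ((measurable_norm.pow_const m).inv.aestronglyMeasurable)
    apply h2.congr
    filter_upwards [hz] with ξ hξ
    have hne : ‖ξ‖ ^ m ≠ 0 := pow_ne_zero m (norm_ne_zero_iff.mpr hξ)
    show (‖ξ‖ ^ m * ‖u0hat ξ‖) * (‖ξ‖ ^ m)⁻¹ = ‖u0hat ξ‖
    rw [mul_comm (‖ξ‖ ^ m) _, mul_assoc, mul_inv_cancel₀ hne, mul_one]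
  have hqm : AEStronglyMeasurable q volume :=
    (hnu.mul hnu).congr (Filter.Eventually.of_forall fun ξ => (pow_two ‖u0hat ξ‖).symm)
  -- integrability from Memℒp
  have hM1 : Integrable (fun ξ : E3 => ‖ξ‖ ^ (2*m) * q ξ) volume := by
    apply (hHm.integrable_sq).congr
    apply Filter.Eventually.of_forall
    intro ξ
    show (‖ξ‖ ^ m * ‖u0hat ξ‖) ^ 2 = ‖ξ‖ ^ (2*m) * q ξ
    rw [mul_pow, ← pow_mul, Nat.mul_comm m 2]
  have hM2 : Integrable (fun ξ : E3 => ‖ξ‖ ^ (2*m+2) * q ξ) volume := by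
    apply (hHm1.integrable_sq).congr
    apply Filter.Eventually.of_forall
    intro ξ
    show (‖ξ‖ ^ (m+1) * ‖u0hat ξ‖) ^ 2 = ‖ξ‖ ^ (2*m+2) * q ξ
    rw [mul_pow, ← pow_mul, show (m+1)*2 = 2*m+2 from by ring]
  have hMint : Integrable (fun ξ : E3 => ‖ξ‖^(2*m) * q ξ + α * (‖ξ‖^(2*m+2) * q ξ)) volume :=
    hM1.add (hM2.const_mul α)
  set M : ℝ := ∫ ξ : E3, (‖ξ‖^(2*m) * q ξ + α * (‖ξ‖^(2*m+2) * q ξ)) with hMdef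
  have hMnn : ∀ᵐ ξ : E3, 0 ≤ ‖ξ‖^(2*m) * q ξ + α * (‖ξ‖^(2*m+2) * q ξ) := by
    apply Filter.Eventually.of_forall
    intro ξ
    exact add_nonneg (mul_nonneg (pow_nonneg (norm_nonneg _) _) (hq0 ξ))
      (mul_nonneg hα.le (mul_nonneg (pow_nonneg (norm_nonneg _) _) (hq0 ξ)))
  have hM0 : 0 ≤ M := integral_nonneg_of_ae hMnn
  -- consequences of the decay character hypothesis
  have hev1 : ∀ᶠ ρ in nhdsWithin 0 (Set.Ioi 0),
      P/2 < ρ ^ (-2*r-3) * ∫ ξ in Metric.closedBall (0:E3) ρ, q ξ :=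
    hlim.eventually_const_lt (by linarith)
  have hev2 : ∀ᶠ ρ in nhdsWithin 0 (Set.Ioi 0),
      ρ ^ (-2*r-3) * (∫ ξ in Metric.closedBall (0:E3) ρ, q ξ) < 2*P :=
    hlim.eventually_lt_const (by linarith)
  have hev := hev1.and hev2
  rw [Filter.eventually_iff] at hev
  obtain ⟨u, hu0, husub⟩ := mem_nhdsGT_iff_exists_Ioc_subset.mp hev
  set ρ₁ : ℝ := min u 1 with hρ₁def
  have hρ₁0 : 0 < ρ₁ := lt_min hu0 one_pos
  have hρ₁1 : ρ₁ ≤ 1 := min_le_right _ _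
  have hprop : ∀ ρ ∈ Set.Ioc (0:ℝ) ρ₁,
      P/2 < ρ ^ (-2*r-3) * (∫ ξ in Metric.closedBall (0:E3) ρ, q ξ) ∧
      ρ ^ (-2*r-3) * (∫ ξ in Metric.closedBall (0:E3) ρ, q ξ) < 2*P := by
    intro ρ hρ
    exact husub ⟨hρ.1, le_trans hρ.2 (min_le_left _ _)⟩
  have hint_ρ : IntegrableOn q (Metric.closedBall (0:E3) ρ₁) := by
    by_contra hna
    have h0 : (∫ ξ in Metric.closedBall (0:E3) ρ₁, q ξ) = 0 := integral_undef hna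
    have h1 := (hprop ρ₁ ⟨hρ₁0, le_refl _⟩).1
    rw [h0, mul_zero] at h1
    linarith
  have hq1 : IntegrableOn q B := by
    have h2 : IntegrableOn q {ξ : E3 | ρ₁ ≤ ‖ξ‖} := by
      apply Integrable.mono' ((hM1.const_mul ((ρ₁ ^ (2*m))⁻¹)).integrableOn)
        hqm.restrict
      filter_upwards [ae_restrict_mem (measurableSet_le measurable_const measurable_norm)]
        with ξ hξ
      rw [Real.norm_eq_abs, abs_of_nonneg (hq0 ξ)]
      have e1 : ρ₁ ^ (2*m) ≤ ‖ξ‖ ^ (2*m) := pow_le_pow_left₀ hρ₁0.le hξ _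
      have e2 : (1:ℝ) ≤ (ρ₁ ^ (2*m))⁻¹ * ‖ξ‖ ^ (2*m) := by
        rw [inv_mul_eq_div, le_div_iff₀ (pow_pos hρ₁0 _)]
        linarith
      calc q ξ = 1 * q ξ := (one_mul _).symm
        _ ≤ ((ρ₁ ^ (2*m))⁻¹ * ‖ξ‖ ^ (2*m)) * q ξ := mul_le_mul_of_nonneg_right e2 (hq0 ξ)
        _ = (ρ₁ ^ (2*m))⁻¹ * (‖ξ‖ ^ (2*m) * q ξ) := by ring
    apply (hint_ρ.union h2).mono_set
    intro ξ hξ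
    by_cases h : ρ₁ ≤ ‖ξ‖
    · exact Or.inr h
    · exact Or.inl (mem_closedBall_zero_iff.mpr (le_of_not_ge h))
  -- uniform bound on F(s)
  set F1 : ℝ := ∫ ξ in B, q ξ with hF1def
  have hF10 : 0 ≤ F1 := setIntegral_nonneg hBmeas (fun ξ _ => hq0 ξ)
  set A : ℝ := max (2*P) ((F1 + 1) * ρ₁ ^ (-lam)) with hAdef
  have hA : 0 < A := lt_of_lt_of_le (by linarith) (le_max_left _ _)
  have hexplam : (-2*r-3 : ℝ) = -lam := by simp only [hlamdef]; ring
  have hFA : ∀ s ∈ Set.Ioc (0:ℝ) 1, (∫ ξ in Metric.closedBall (0:E3) s, q ξ) ≤ A * s ^ lam := by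
    intro s hs
    by_cases hcase : s ≤ ρ₁
    · have h3 := (hprop s ⟨hs.1, hcase⟩).2
      rw [hexplam] at h3
      have hsp : (0:ℝ) < s ^ lam := Real.rpow_pos_of_pos hs.1 _
      have h5 : s ^ lam * (s ^ (-lam) * (∫ ξ in Metric.closedBall (0:E3) s, q ξ))
          = ∫ ξ in Metric.closedBall (0:E3) s, q ξ := by
        rw [← mul_assoc, ← Real.rpow_add hs.1]
        simp
      have h4 : (∫ ξ in Metric.closedBall (0:E3) s, q ξ) < 2*P * s ^ lam := by
        calc (∫ ξ in Metric.closedBall (0:E3) s, q ξ)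
            = s ^ lam * (s ^ (-lam) * (∫ ξ in Metric.closedBall (0:E3) s, q ξ)) := h5.symm
          _ < s ^ lam * (2*P) := by
              exact mul_lt_mul_of_pos_left h3 hsp
          _ = 2*P * s ^ lam := by ring
      exact le_trans h4.le
        (mul_le_mul_of_nonneg_right (le_max_left _ _) (Real.rpow_nonneg hs.1.le _))
    · push_neg at hcase
      have h6 : (∫ ξ in Metric.closedBall (0:E3) s, q ξ) ≤ F1 := by
        apply setIntegral_mono_set hq1
        · filter_upwards [ae_restrict_mem hBmeas] with ξ _
          exact hq0 ξ
        · exact HasSubset.Subset.eventuallyLE (Metric.closedBall_subset_closedBall hs.2)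
      have h7 : ρ₁ ^ lam ≤ s ^ lam := Real.rpow_le_rpow hρ₁0.le hcase.le hlam.le
      have h8 : ρ₁ ^ (-lam) * ρ₁ ^ lam = 1 := by
        rw [← Real.rpow_add hρ₁0]
        simp
      have h9 : F1 + 1 ≤ (F1 + 1) * ρ₁ ^ (-lam) * s ^ lam := by
        calc F1 + 1 = (F1 + 1) * (ρ₁ ^ (-lam) * ρ₁ ^ lam) := by rw [h8]; ring
          _ ≤ (F1 + 1) * (ρ₁ ^ (-lam) * s ^ lam) := by
              apply mul_le_mul_of_nonneg_left _ (by linarith)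
              exact mul_le_mul_of_nonneg_left h7 (Real.rpow_nonneg hρ₁0.le _)
          _ = (F1 + 1) * ρ₁ ^ (-lam) * s ^ lam := by ring
      calc (∫ ξ in Metric.closedBall (0:E3) s, q ξ) ≤ F1 := h6
        _ ≤ (F1 + 1) * ρ₁ ^ (-lam) * s ^ lam := by linarith
        _ ≤ A * s ^ lam := by
            apply mul_le_mul_of_nonneg_right (le_max_right _ _) (Real.rpow_nonneg hs.1.le _)
  -- constants
  obtain ⟨C₁, hC₁, hC₁le⟩ := aux_exp_rpow hc hK
  set Γv : ℝ := Real.Gamma ((((2*m : ℕ):ℝ) + 1 + lam + 1) / 2) with hΓvdef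
  have hΓv : 0 < Γv := Real.Gamma_pos_of_pos
    (div_pos (by have h2m : (0:ℝ) ≤ ((2*m : ℕ):ℝ) := Nat.cast_nonneg _; linarith) two_pos)
  have hCK2 : (0:ℝ) < (c/2) ^ (-K) := Real.rpow_pos_of_pos (half_pos hc) _
  have h2K : (0:ℝ) < (2:ℝ) ^ K := Real.rpow_pos_of_pos two_pos _
  set C₂ : ℝ := (1+α) * (C₁*A + A*Γv*(c/2)^(-K)) + C₁*M + (M+1)*(2:ℝ)^K with hC₂def
  have hC₂ : 0 < C₂ := by
    have t1 : 0 < (1+α) * (C₁*A + A*Γv*(c/2)^(-K)) :=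
      mul_pos h1α (add_pos (mul_pos hC₁ hA) (mul_pos (mul_pos hA hΓv) hCK2))
    have t2 : 0 ≤ C₁*M := mul_nonneg hC₁.le hM0
    have t3 : 0 < (M+1)*(2:ℝ)^K := mul_pos (by linarith) h2K
    simp only [hC₂def]; linarith
  refine ⟨C₂, 1, hC₂, one_pos, ?_⟩
  intro t ht
  have htp1 : (0:ℝ) < t + 1 := by linarith
  set β : ℝ := (t + 1) ^ (-K) with hβdef
  have hβ0 : 0 < β := Real.rpow_pos_of_pos htp1 _
  -- pointwise rewriting of the squared norm
  have hEneg : ∀ ξ : E3, ‖Real.exp (-(μ * ‖ξ‖ ^ 2) * t / (1 + α * ‖ξ‖ ^ 2)) • u0hat ξ‖ ^ 2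
      = Real.exp (2 * (-(μ * ‖ξ‖ ^ 2) * t / (1 + α * ‖ξ‖ ^ 2))) * q ξ := by
    intro ξ
    rw [norm_smul, mul_pow, Real.norm_eq_abs, sq_abs, pow_two, ← Real.exp_add, two_mul]
  have hd : ∀ ξ : E3, (0:ℝ) < 1 + α * ‖ξ‖ ^ 2 := by
    intro ξ
    have := sq_nonneg ‖ξ‖
    nlinarith
  -- nonnegativity of the integrand
  have hf_nn : ∀ᵐ ξ : E3, 0 ≤ ‖ξ‖ ^ (2 * m) * (1 + α * ‖ξ‖ ^ 2) *
      ‖Real.exp (-(μ * ‖ξ‖ ^ 2) * t / (1 + α * ‖ξ‖ ^ 2)) • u0hat ξ‖ ^ 2 := by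
    apply Filter.Eventually.of_forall
    intro ξ
    exact mul_nonneg (mul_nonneg (pow_nonneg (norm_nonneg _) _) (hd ξ).le) (sq_nonneg _)
  by_cases hbranch : t ≤ 1
  · -- small times: crude bound
    have hfg : ∀ ξ : E3, ‖ξ‖ ^ (2 * m) * (1 + α * ‖ξ‖ ^ 2) *
        ‖Real.exp (-(μ * ‖ξ‖ ^ 2) * t / (1 + α * ‖ξ‖ ^ 2)) • u0hat ξ‖ ^ 2
        ≤ ‖ξ‖^(2*m) * q ξ + α * (‖ξ‖^(2*m+2) * q ξ) := by
      intro ξ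
      rw [hEneg ξ]
      have he : Real.exp (2 * (-(μ * ‖ξ‖ ^ 2) * t / (1 + α * ‖ξ‖ ^ 2))) ≤ 1 := by
        rw [Real.exp_le_one_iff]
        have hnum : -(μ * ‖ξ‖ ^ 2) * t ≤ 0 := by
          have := mul_nonneg (mul_nonneg hμ.le (sq_nonneg ‖ξ‖)) ht
          linarith
        have h5 : -(μ * ‖ξ‖ ^ 2) * t / (1 + α * ‖ξ‖ ^ 2) ≤ 0 :=
          div_nonpos_of_nonpos_of_nonneg hnum (hd ξ).le
        linarith
      calc ‖ξ‖ ^ (2 * m) * (1 + α * ‖ξ‖ ^ 2) *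
          (Real.exp (2 * (-(μ * ‖ξ‖ ^ 2) * t / (1 + α * ‖ξ‖ ^ 2))) * q ξ)
          ≤ ‖ξ‖ ^ (2 * m) * (1 + α * ‖ξ‖ ^ 2) * (1 * q ξ) := by
            apply mul_le_mul_of_nonneg_left
              (mul_le_mul_of_nonneg_right he (hq0 ξ))
              (mul_nonneg (pow_nonneg (norm_nonneg _) _) (hd ξ).le)
        _ = ‖ξ‖^(2*m) * q ξ + α * (‖ξ‖^(2*m+2) * q ξ) := by
            rw [pow_add]; ring
    have hle1 : (∫ ξ : E3, ‖ξ‖ ^ (2 * m) * (1 + α * ‖ξ‖ ^ 2) *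
        ‖Real.exp (-(μ * ‖ξ‖ ^ 2) * t / (1 + α * ‖ξ‖ ^ 2)) • u0hat ξ‖ ^ 2) ≤ M :=
      integral_mono_of_nonneg hf_nn hMint (Filter.Eventually.of_forall hfg)
    have e1 : (2:ℝ)^(-K) ≤ β := by
      rw [hβdef]
      exact Real.rpow_le_rpow_of_nonpos htp1 (by linarith) (neg_nonpos.mpr hK.le)
    have e2 : (2:ℝ)^K * (2:ℝ)^(-K) = 1 := by
      rw [← Real.rpow_add two_pos]
      simp
    have e3 : M ≤ (M+1) * ((2:ℝ)^K * β) := by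
      calc M ≤ M + 1 := by linarith
        _ = (M+1) * ((2:ℝ)^K * (2:ℝ)^(-K)) := by rw [e2]; ring
        _ ≤ (M+1) * ((2:ℝ)^K * β) := by
            apply mul_le_mul_of_nonneg_left _ (by linarith)
            exact mul_le_mul_of_nonneg_left e1 h2K.le
    calc (∫ ξ : E3, ‖ξ‖ ^ (2 * m) * (1 + α * ‖ξ‖ ^ 2) *
        ‖Real.exp (-(μ * ‖ξ‖ ^ 2) * t / (1 + α * ‖ξ‖ ^ 2)) • u0hat ξ‖ ^ 2)
        ≤ M := hle1
      _ ≤ (M+1) * ((2:ℝ)^K * β) := e3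
      _ ≤ C₂ * (t + 1) ^ (-K) := by
          rw [hC₂def, ← hβdef]
          have t1 : 0 ≤ (1+α) * (C₁*A + A*Γv*(c/2)^(-K)) * β :=
            mul_nonneg (mul_pos h1α (add_pos (mul_pos hC₁ hA)
              (mul_pos (mul_pos hA hΓv) hCK2))).le hβ0.le
          have t2 : 0 ≤ C₁*M*β := mul_nonneg (mul_nonneg hC₁.le hM0) hβ0.le
          nlinarith
  · push_neg at hbranch
    have ht1 : (1:ℝ) ≤ t := hbranch.le
    have hbt : 0 < c * t := by positivity
    -- pointwise bounds
    have hlow : ∀ ξ : E3, ξ ∈ B → ‖ξ‖ ^ (2 * m) * (1 + α * ‖ξ‖ ^ 2) *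
        ‖Real.exp (-(μ * ‖ξ‖ ^ 2) * t / (1 + α * ‖ξ‖ ^ 2)) • u0hat ξ‖ ^ 2
        ≤ (1+α) * (‖ξ‖ ^ (2*m) * Real.exp (-(c*t) * ‖ξ‖ ^ 2) * q ξ) := by
      intro ξ hξ
      have hnorm1 : ‖ξ‖ ≤ 1 := by simpa [hBset, mem_closedBall_zero_iff] using hξ
      have hdd := hd ξ
      rw [hEneg ξ]
      have claim1 : Real.exp (2 * (-(μ * ‖ξ‖ ^ 2) * t / (1 + α * ‖ξ‖ ^ 2)))
          ≤ Real.exp (-(c*t) * ‖ξ‖ ^ 2) := by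
        rw [Real.exp_le_exp, ← mul_div_assoc, div_le_iff₀ hdd]
        have hsq1 : ‖ξ‖^2 ≤ 1 := pow_le_one₀ (norm_nonneg _) hnorm1
        have h4 : ‖ξ‖^2 * ‖ξ‖^2 ≤ ‖ξ‖^2 := mul_le_of_le_one_right (sq_nonneg _) hsq1
        have key : 2*μ*(‖ξ‖^2*t) = c*(1+α)*(‖ξ‖^2*t) := by rw [hc']
        have hint : 0 ≤ c*t*α*(‖ξ‖^2 - ‖ξ‖^2*‖ξ‖^2) :=
          mul_nonneg (mul_nonneg (mul_nonneg hc.le ht) hα.le) (by linarith)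
        nlinarith [key, hint]
      have claim2 : 1 + α * ‖ξ‖ ^ 2 ≤ 1 + α := by
        have hsq1 : ‖ξ‖^2 ≤ 1 := pow_le_one₀ (norm_nonneg _) hnorm1
        have := mul_nonneg hα.le (by linarith : (0:ℝ) ≤ 1 - ‖ξ‖^2)
        nlinarith [this]
      calc ‖ξ‖ ^ (2 * m) * (1 + α * ‖ξ‖ ^ 2) *
          (Real.exp (2 * (-(μ * ‖ξ‖ ^ 2) * t / (1 + α * ‖ξ‖ ^ 2))) * q ξ)
          ≤ ‖ξ‖ ^ (2 * m) * (1 + α) *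
            (Real.exp (-(c*t) * ‖ξ‖ ^ 2) * q ξ) := by
            apply mul_le_mul
            · exact mul_le_mul_of_nonneg_left claim2 (by positivity)
            · exact mul_le_mul_of_nonneg_right claim1 (hq0 ξ)
            · exact mul_nonneg (Real.exp_pos _).le (hq0 ξ)
            · positivity
        _ = (1+α) * (‖ξ‖ ^ (2*m) * Real.exp (-(c*t) * ‖ξ‖ ^ 2) * q ξ) := by ring
    have hhigh : ∀ ξ : E3, ξ ∉ B → ‖ξ‖ ^ (2 * m) * (1 + α * ‖ξ‖ ^ 2) *
        ‖Real.exp (-(μ * ‖ξ‖ ^ 2) * t / (1 + α * ‖ξ‖ ^ 2)) • u0hat ξ‖ ^ 2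
        ≤ Real.exp (-(c*t)) * (‖ξ‖^(2*m) * q ξ + α * (‖ξ‖^(2*m+2) * q ξ)) := by
      intro ξ hξ
      have hnorm1 : 1 ≤ ‖ξ‖ := by
        simp only [hBset, Metric.mem_closedBall, not_le, dist_zero_right] at hξ
        exact hξ.le
      have hdd := hd ξ
      rw [hEneg ξ]
      have claim3 : Real.exp (2 * (-(μ * ‖ξ‖ ^ 2) * t / (1 + α * ‖ξ‖ ^ 2)))
          ≤ Real.exp (-(c*t)) := by
        rw [Real.exp_le_exp, ← mul_div_assoc, div_le_iff₀ hdd]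
        have h4 : 1 ≤ ‖ξ‖^2 := one_le_pow₀ hnorm1
        have key : 2*μ*(‖ξ‖^2*t) = c*(1+α)*(‖ξ‖^2*t) := by rw [hc']
        have hint : 0 ≤ c*t*(‖ξ‖^2 - 1) :=
          mul_nonneg (mul_nonneg hc.le ht) (by linarith)
        nlinarith [key, hint]
      calc ‖ξ‖ ^ (2 * m) * (1 + α * ‖ξ‖ ^ 2) *
          (Real.exp (2 * (-(μ * ‖ξ‖ ^ 2) * t / (1 + α * ‖ξ‖ ^ 2))) * q ξ)
          ≤ ‖ξ‖ ^ (2 * m) * (1 + α * ‖ξ‖ ^ 2) * (Real.exp (-(c*t)) * q ξ) := by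
            apply mul_le_mul_of_nonneg_left
              (mul_le_mul_of_nonneg_right claim3 (hq0 ξ))
              (mul_nonneg (pow_nonneg (norm_nonneg _) _) (hd ξ).le)
        _ = Real.exp (-(c*t)) * (‖ξ‖^(2*m) * q ξ + α * (‖ξ‖^(2*m+2) * q ξ)) := by
            rw [pow_add]; ring
    -- the dominating function
    set g1 : E3 → ℝ := fun ξ => (1+α) * (‖ξ‖ ^ (2*m) * Real.exp (-(c*t) * ‖ξ‖ ^ 2) * q ξ)
      with hg1def
    set g2 : E3 → ℝ := fun ξ => Real.exp (-(c*t)) * (‖ξ‖^(2*m) * q ξ + α * (‖ξ‖^(2*m+2) * q ξ))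
      with hg2def
    have hg1int : IntegrableOn g1 B := by
      apply Integrable.mono' (hq1.const_mul (1+α))
      · exact (((by fun_prop : Continuous fun ξ : E3 =>
          (1+α) * (‖ξ‖ ^ (2*m) * Real.exp (-(c*t) * ‖ξ‖ ^ 2))).aestronglyMeasurable).mul
            hqm.restrict).congr (by
              apply Filter.Eventually.of_forall
              intro ξ
              simp only [hg1def, Pi.mul_apply]
              ring)
      · filter_upwards [ae_restrict_mem hBmeas] with ξ hξ
        have hnorm1 : ‖ξ‖ ≤ 1 := by simpa [hBset, mem_closedBall_zero_iff] using hξ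
        have e1 : ‖ξ‖ ^ (2*m) ≤ 1 := pow_le_one₀ (norm_nonneg _) hnorm1
        have e2 : Real.exp (-(c*t) * ‖ξ‖ ^ 2) ≤ 1 := by
          apply Real.exp_le_one_iff.mpr
          rw [neg_mul]
          exact neg_nonpos.mpr (mul_nonneg (mul_nonneg hc.le ht) (sq_nonneg _))
        have e3 : ‖ξ‖ ^ (2*m) * Real.exp (-(c*t) * ‖ξ‖ ^ 2) ≤ 1 :=
          mul_le_one₀ e1 (Real.exp_pos _).le e2
        rw [Real.norm_eq_abs, hg1def, abs_of_nonneg (mul_nonneg h1α.le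
          (mul_nonneg (mul_nonneg (pow_nonneg (norm_nonneg _) _) (Real.exp_pos _).le)
            (hq0 ξ)))]
        calc (1+α) * (‖ξ‖ ^ (2*m) * Real.exp (-(c*t) * ‖ξ‖ ^ 2) * q ξ)
            = (1+α) * ((‖ξ‖ ^ (2*m) * Real.exp (-(c*t) * ‖ξ‖ ^ 2)) * q ξ) := by ring
          _ ≤ (1+α) * (1 * q ξ) := by
              apply mul_le_mul_of_nonneg_left
                (mul_le_mul_of_nonneg_right e3 (hq0 ξ)) h1α.le
          _ = (1+α) * q ξ := by ring
    have hg2int : Integrable g2 volume := hMint.const_mul _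
    have hgint : Integrable (fun ξ => B.indicator g1 ξ + Bᶜ.indicator g2 ξ) volume :=
      (hg1int.integrable_indicator hBmeas).add
        (hg2int.integrableOn.integrable_indicator hBmeas.compl)
    have hfg : ∀ ξ : E3, ‖ξ‖ ^ (2 * m) * (1 + α * ‖ξ‖ ^ 2) *
        ‖Real.exp (-(μ * ‖ξ‖ ^ 2) * t / (1 + α * ‖ξ‖ ^ 2)) • u0hat ξ‖ ^ 2
        ≤ B.indicator g1 ξ + Bᶜ.indicator g2 ξ := by
      intro ξ
      by_cases hξ : ξ ∈ B
      · rw [Set.indicator_of_mem hξ, Set.indicator_of_notMem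
          (Set.notMem_compl_iff.mpr hξ), add_zero]
        exact hlow ξ hξ
      · rw [Set.indicator_of_notMem hξ, Set.indicator_of_mem (Set.mem_compl hξ), zero_add]
        exact hhigh ξ hξ
    have hsplit : (∫ ξ : E3, ‖ξ‖ ^ (2 * m) * (1 + α * ‖ξ‖ ^ 2) *
        ‖Real.exp (-(μ * ‖ξ‖ ^ 2) * t / (1 + α * ‖ξ‖ ^ 2)) • u0hat ξ‖ ^ 2)
        ≤ (∫ ξ in B, g1 ξ) + ∫ ξ in Bᶜ, g2 ξ := by
      calc (∫ ξ : E3, ‖ξ‖ ^ (2 * m) * (1 + α * ‖ξ‖ ^ 2) *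
          ‖Real.exp (-(μ * ‖ξ‖ ^ 2) * t / (1 + α * ‖ξ‖ ^ 2)) • u0hat ξ‖ ^ 2)
          ≤ ∫ ξ : E3, (B.indicator g1 ξ + Bᶜ.indicator g2 ξ) :=
            integral_mono_of_nonneg hf_nn hgint (Filter.Eventually.of_forall hfg)
        _ = (∫ ξ : E3, B.indicator g1 ξ) + ∫ ξ : E3, Bᶜ.indicator g2 ξ :=
            integral_add (hg1int.integrable_indicator hBmeas)
              (hg2int.integrableOn.integrable_indicator hBmeas.compl)
        _ = (∫ ξ in B, g1 ξ) + ∫ ξ in Bᶜ, g2 ξ := by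
            rw [integral_indicator hBmeas, integral_indicator hBmeas.compl]
    -- low frequency bound via aux_low
    have hlowint : (∫ ξ in B, g1 ξ) ≤ (1+α) * (Real.exp (-(c*t)) * A + A * Γv * (c*t) ^ (-K)) := by
      have h10 := aux_low hbt hA hlam (2*m) q hq0 hqm hq1 hFA
      have hexpK : (((2*m : ℕ):ℝ) + lam) / 2 = K := by
        push_cast
        simp only [hlamdef, hKdef]
        ring
      rw [hexpK] at h10
      calc (∫ ξ in B, g1 ξ) = (1+α) * ∫ ξ in B, ‖ξ‖ ^ (2*m) * Real.exp (-(c*t) * ‖ξ‖ ^ 2) * q ξ := by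
            simp only [hg1def]
            rw [integral_const_mul]
        _ ≤ (1+α) * (Real.exp (-(c*t)) * A + A * Γv * (c*t) ^ (-K)) := by
            apply mul_le_mul_of_nonneg_left _ h1α.le
            exact h10
    have hhighint : (∫ ξ in Bᶜ, g2 ξ) ≤ Real.exp (-(c*t)) * M := by
      calc (∫ ξ in Bᶜ, g2 ξ) = Real.exp (-(c*t)) *
          ∫ ξ in Bᶜ, (‖ξ‖^(2*m) * q ξ + α * (‖ξ‖^(2*m+2) * q ξ)) := by
            simp only [hg2def]
            rw [integral_const_mul]
        _ ≤ Real.exp (-(c*t)) * M := by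
            apply mul_le_mul_of_nonneg_left _ (Real.exp_pos _).le
            exact setIntegral_le_integral hMint hMnn
    -- numeric assembly
    have b1 : Real.exp (-(c*t)) ≤ C₁ * β := hC₁le t ht
    have b2 : (c*t) ^ (-K) ≤ (c/2)^(-K) * β := by
      have h1 : (c/2)*(t+1) ≤ c*t := by
        nlinarith [mul_nonneg hc.le (by linarith : (0:ℝ) ≤ t - 1)]
      have h2 : (c*t)^(-K) ≤ ((c/2)*(t+1))^(-K) :=
        Real.rpow_le_rpow_of_nonpos (mul_pos (half_pos hc) htp1) h1 (neg_nonpos.mpr hK.le)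
      rwa [Real.mul_rpow (half_pos hc).le htp1.le] at h2
    have d1 : (1+α) * (Real.exp (-(c*t)) * A) ≤ (1+α) * (C₁ * β * A) :=
      mul_le_mul_of_nonneg_left (mul_le_mul_of_nonneg_right b1 hA.le) h1α.le
    have d2 : (1+α) * (A * Γv * (c*t) ^ (-K)) ≤ (1+α) * (A * Γv * ((c/2)^(-K) * β)) :=
      mul_le_mul_of_nonneg_left (mul_le_mul_of_nonneg_left b2
        (mul_nonneg hA.le hΓv.le)) h1α.le
    have d3 : Real.exp (-(c*t)) * M ≤ C₁ * β * M :=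
      mul_le_mul_of_nonneg_right b1 hM0
    have d4 : 0 ≤ (M+1)*(2:ℝ)^K*β :=
      mul_nonneg (mul_nonneg (by linarith) h2K.le) hβ0.le
    calc (∫ ξ : E3, ‖ξ‖ ^ (2 * m) * (1 + α * ‖ξ‖ ^ 2) *
        ‖Real.exp (-(μ * ‖ξ‖ ^ 2) * t / (1 + α * ‖ξ‖ ^ 2)) • u0hat ξ‖ ^ 2)
        ≤ (∫ ξ in B, g1 ξ) + ∫ ξ in Bᶜ, g2 ξ := hsplit
      _ ≤ (1+α) * (Real.exp (-(c*t)) * A + A * Γv * (c*t) ^ (-K)) + Real.exp (-(c*t)) * M :=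
          add_le_add hlowint hhighint
      _ = (1+α) * (Real.exp (-(c*t)) * A) + (1+α) * (A * Γv * (c*t) ^ (-K))
          + Real.exp (-(c*t)) * M := by ring
      _ ≤ (1+α) * (C₁ * β * A) + (1+α) * (A * Γv * ((c/2)^(-K) * β)) + C₁ * β * M :=
          add_le_add (add_le_add d1 d2) d3
      _ ≤ C₂ * (t + 1) ^ (-K) := by
          rw [hC₂def, ← hβdef]
          have expand : ((1+α) * (C₁*A + A*Γv*(c/2)^(-K)) + C₁*M + (M+1)*(2:ℝ)^K) * β
              = (1+α) * (C₁ * β * A) + (1+α) * (A * Γv * ((c/2)^(-K) * β)) + C₁ * β * M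
                + (M+1)*(2:ℝ)^K*β := by ring
          rw [expand]
          linarith [d4]
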